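/- Let F : ℂⁿ → ℂⁿ be a polynomial map of degree ≤ 2 such that det JF is a constant c ∈ ℂ. Then for every s ∈ ℕ, all α₁, ..., α_s ∈ ℂⁿ and all b₁, ..., b_s ∈ ℂ, det(∑_{i=1}^s b_i · (JF)(α_i)) = (∑_{i=1}^s b_i)ⁿ · c. -/

import Mathlib

open MvPolynomial

/-- The Jacobian matrix of a polynomial map, as a matrix of polynomials. -/
noncomputable def jacPoly {n m : ℕ} (F : Fin m → MvPolynomial (Fin n) ℂ) :
    Matrix (Fin m) (Fin n) (MvPolynomial (Fin n) ℂ) :=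
  Matrix.of fun i j => pderiv j (F i)

/-- The Jacobian matrix of a polynomial map `F : ℂⁿ → ℂᵐ`, evaluated at `α`. -/
noncomputable def jacEval {n m : ℕ} (F : Fin m → MvPolynomial (Fin n) ℂ)
    (α : Fin n → ℂ) : Matrix (Fin m) (Fin n) ℂ :=
  Matrix.of fun i j => eval α (pderiv j (F i))

lemma totalDegree_pderiv_le {n : ℕ} (p : MvPolynomial (Fin n) ℂ) (j : Fin n) :
    (pderiv j p).totalDegree ≤ p.totalDegree - 1 := by
  conv_lhs => rw [p.as_sum]
  rw [map_sum]
  refine le_trans (totalDegree_finset_sum _ _) (Finset.sup_le fun d hd => ?_)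
  rw [pderiv_monomial]
  by_cases hdj : d j = 0
  · simp [hdj]
  · refine le_trans (totalDegree_monomial_le _ _) ?_
    have hd' : (d - Finsupp.single j 1) + Finsupp.single j 1 = d := by
      ext m
      by_cases hm : m = j
      · subst hm; simp; omega
      · simp [Finsupp.single_eq_of_ne' (Ne.symm hm)]
    have hs : (d.sum fun _ e => e) = ((d - Finsupp.single j 1).sum fun _ e => e) + 1 := by
      conv_lhs => rw [← hd']
      rw [Finsupp.sum_add_index' (fun _ => rfl) (fun _ _ _ => rfl),
        Finsupp.sum_single_index rfl]
    have := le_totalDegree hd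
    show ((d - Finsupp.single j 1).sum fun _ e => e) ≤ p.totalDegree - 1
    omega

lemma eval_affine {n : ℕ} (p : MvPolynomial (Fin n) ℂ) (hp : p.totalDegree ≤ 1)
    (x : Fin n → ℂ) :
    eval x p = coeff 0 p + ∑ k, coeff (Finsupp.single k 1) p * x k := by
  classical
  have hsub : p.support ⊆ insert 0 (Finset.univ.image (fun k : Fin n => Finsupp.single k 1)) := by
    intro d hd
    have hsum : ∑ k, d k ≤ 1 := by
      have := le_trans (le_totalDegree hd) hp
      rwa [Finsupp.sum_fintype _ _ (fun _ => rfl)] at this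
    by_cases h0 : d = 0
    · simp [h0]
    · obtain ⟨k, hk⟩ : ∃ k, d k ≠ 0 := by
        by_contra h; push_neg at h; exact h0 (Finsupp.ext h)
      have hle : d k ≤ ∑ m, d m :=
        Finset.single_le_sum (fun _ _ => Nat.zero_le _) (Finset.mem_univ k)
      have hdk : d k = 1 := by omega
      have : d = Finsupp.single k 1 := by
        ext m
        by_cases hm : m = k
        · simp [hm, hdk]
        · have h2 : d k + d m ≤ ∑ x, d x := by
            have hss := Finset.sum_le_sum_of_subset
              (Finset.subset_univ ({k, m} : Finset (Fin n))) (f := fun x => d x)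
            rwa [Finset.sum_pair (fun h => hm h.symm)] at hss
          have : d m = 0 := by omega
          simp [this, Finsupp.single_eq_of_ne' (fun h => hm h.symm)]
      rw [this]
      exact Finset.mem_insert_of_mem (Finset.mem_image_of_mem _ (Finset.mem_univ k))
  rw [eval_eq']
  rw [Finset.sum_subset hsub (fun d _ hd => by
    rw [MvPolynomial.notMem_support_iff.1 hd, zero_mul])]
  rw [Finset.sum_insert (by simp [eq_comm, Finsupp.single_eq_zero])]
  rw [Finset.sum_image (fun a _ b _ h => Finsupp.single_left_injective one_ne_zero h)]
  congr 1
  · simp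
  · refine Finset.sum_congr rfl fun k _ => ?_
    congr 1
    rw [Finset.prod_eq_single k (fun m _ hm => by simp [Finsupp.single_eq_of_ne' (Ne.symm hm)])
      (fun h => absurd (Finset.mem_univ k) h)]
    simp

noncomputable def constMat {n : ℕ} (F : Fin n → MvPolynomial (Fin n) ℂ) :
    Matrix (Fin n) (Fin n) ℂ :=
  Matrix.of fun i j => coeff 0 (pderiv j (F i))

noncomputable def linMat {n : ℕ} (F : Fin n → MvPolynomial (Fin n) ℂ) (x : Fin n → ℂ) :
    Matrix (Fin n) (Fin n) ℂ :=
  Matrix.of fun i j => ∑ k, coeff (Finsupp.single k 1) (pderiv j (F i)) * x k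

lemma det_affine_scaled {n : ℕ} (A : Matrix (Fin n) (Fin n) ℂ)
    (B : (Fin n → ℂ) → Matrix (Fin n) (Fin n) ℂ)
    (hB : ∀ (r : ℂ) (v : Fin n → ℂ), B (r • v) = r • B v)
    (c : ℂ) (hdet : ∀ x, (A + B x).det = c)
    (t : ℂ) (v : Fin n → ℂ) :
    (t • A + B v).det = t ^ n * c := by
  set N : Matrix (Fin n) (Fin n) (Polynomial ℂ) :=
    Matrix.of fun i j => Polynomial.C (B v i j) + Polynomial.X * Polynomial.C (A i j) with hNdef
  have heval : ∀ μ : ℂ, Polynomial.eval μ N.det = (μ • A + B v).det := by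
    intro μ
    have h : (Polynomial.evalRingHom μ).mapMatrix N = μ • A + B v := by
      ext i j
      show Polynomial.eval μ (Polynomial.C (B v i j) + Polynomial.X * Polynomial.C (A i j))
        = μ * A i j + B v i j
      rw [Polynomial.eval_add, Polynomial.eval_mul, Polynomial.eval_C, Polynomial.eval_X,
        Polynomial.eval_C]
      ring
    rw [show Polynomial.eval μ N.det = (Polynomial.evalRingHom μ) N.det from rfl,
      RingHom.map_det, h]
  have hroot : ∀ μ : ℂ, μ ≠ 0 → Polynomial.eval μ N.det = μ ^ n * c := by
    intro μ hμ
    rw [heval]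
    have h1 : μ • A + B v = μ • (A + B (μ⁻¹ • v)) := by
      rw [hB, smul_add, smul_smul, mul_inv_cancel₀ hμ, one_smul]
    rw [h1, Matrix.det_smul, hdet, Fintype.card_fin]
  have hN : N.det = Polynomial.C c * Polynomial.X ^ n := by
    have hz : (N.det - Polynomial.C c * Polynomial.X ^ n) = 0 := by
      apply Polynomial.eq_zero_of_infinite_isRoot
      have hinf : Set.Infinite ({(0 : ℂ)}ᶜ : Set ℂ) :=
        Set.Finite.infinite_compl (Set.finite_singleton 0)
      refine hinf.mono ?_
      intro μ hμ
      have hμ' : μ ≠ 0 := hμ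
      simp only [Set.mem_setOf_eq, Polynomial.IsRoot, Polynomial.eval_sub,
        Polynomial.eval_mul, Polynomial.eval_pow, Polynomial.eval_C, Polynomial.eval_X]
      rw [hroot μ hμ']; ring
    have := sub_eq_zero.mp hz
    exact this
  have := heval t
  rw [hN] at this
  simp only [Polynomial.eval_mul, Polynomial.eval_pow, Polynomial.eval_C,
    Polynomial.eval_X] at this
  rw [← this]
  ring

theorem stmt_10 (n : ℕ) (F : Fin n → MvPolynomial (Fin n) ℂ)
    (hdeg : ∀ i, (F i).totalDegree ≤ 2)
    (c : ℂ) (hK : (jacPoly F).det = MvPolynomial.C c) :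
    ∀ (s : ℕ) (α : Fin s → Fin n → ℂ) (b : Fin s → ℂ),
      (∑ i, b i • jacEval F (α i)).det = (∑ i, b i) ^ n * c := by
  intro s α b
  have hpd : ∀ i j, (pderiv j (F i)).totalDegree ≤ 1 := fun i j => by
    have h1 := totalDegree_pderiv_le (F i) j
    have h2 := hdeg i
    omega
  have hJE : ∀ x, jacEval F x = constMat F + linMat F x := by
    intro x
    ext i j
    exact eval_affine _ (hpd i j) x
  have hdet : ∀ x, (constMat F + linMat F x).det = c := by
    intro x
    rw [← hJE]
    have h : jacEval F x = (eval x : MvPolynomial (Fin n) ℂ →+* ℂ).mapMatrix (jacPoly F) := rfl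
    rw [h, ← RingHom.map_det, hK, eval_C]
  have hB : ∀ (r : ℂ) (v : Fin n → ℂ), linMat F (r • v) = r • linMat F v := by
    intro r v
    ext i j
    simp only [linMat, Matrix.of_apply, Matrix.smul_apply, smul_eq_mul, Pi.smul_apply,
      Finset.mul_sum]
    exact Finset.sum_congr rfl fun k _ => by ring
  have hBsum : linMat F (∑ i, b i • α i) = ∑ i, b i • linMat F (α i) := by
    ext i j
    simp only [linMat, Matrix.of_apply, Matrix.sum_apply, Matrix.smul_apply, smul_eq_mul,
      Finset.sum_apply, Pi.smul_apply, Finset.mul_sum]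
    rw [Finset.sum_comm]
    refine Finset.sum_congr rfl fun k _ => ?_
    exact Finset.sum_congr rfl fun m _ => by ring
  have hS : ∑ i, b i • jacEval F (α i)
      = (∑ i, b i) • constMat F + linMat F (∑ i, b i • α i) := by
    rw [hBsum, Finset.sum_smul]
    rw [← Finset.sum_add_distrib]
    refine Finset.sum_congr rfl fun i _ => ?_
    rw [hJE, smul_add]
  rw [hS]
  exact det_affine_scaled (constMat F) (linMat F) hB c hdet _ _
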